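/- The operator ∇ = Σ_{i ≥ 1} ∂/∂x_i on ℤ[x₁,x₂,…] (a well-defined operator, since each polynomial involves finitely many variables) commutes with every divided difference operator: ∇ ∘ ∂_i = ∂_i ∘ ∇ for all i ≥ 1. -/

import Mathlib

open MvPolynomial

/-- The operator `∇ = Σ_{i ≥ 1} ∂/∂xᵢ` on `ℤ[x₁, x₂, …]` (well defined, since each
polynomial involves only finitely many variables). -/
noncomputable def nabla (f : MvPolynomial ℕ+ ℤ) : MvPolynomial ℕ+ ℤ :=
  ∑ᶠ i : ℕ+, pderiv i f

lemma support_pderiv_finite (f : MvPolynomial ℕ+ ℤ) :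
    (Function.support fun i => pderiv i f).Finite := by
  apply Set.Finite.subset f.vars.finite_toSet
  intro i hi
  by_contra h
  exact hi (pderiv_eq_zero_of_notMem_vars (by simpa using h))

lemma nabla_sub (f g : MvPolynomial ℕ+ ℤ) : nabla (f - g) = nabla f - nabla g := by
  unfold nabla
  rw [← finsum_sub_distrib (support_pderiv_finite f) (support_pderiv_finite g)]
  simp [map_sub]

lemma nabla_mul (f g : MvPolynomial ℕ+ ℤ) :
    nabla (f * g) = nabla f * g + f * nabla g := by
  unfold nabla
  have h1 : ∀ i : ℕ+, pderiv i (f * g) = pderiv i f * g + f * pderiv i g :=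
    fun i => pderiv_mul
  rw [finsum_congr h1]
  rw [finsum_add_distrib ((support_pderiv_finite f).subset (by
        intro i hi; simp only [Function.mem_support] at hi ⊢
        intro h; apply hi; rw [h, zero_mul]))
      ((support_pderiv_finite g).subset (by
        intro i hi; simp only [Function.mem_support] at hi ⊢
        intro h; apply hi; rw [h, mul_zero]))]
  rw [finsum_mul _ g, mul_finsum _ f]

lemma nabla_rename (σ : Equiv.Perm ℕ+) (f : MvPolynomial ℕ+ ℤ) :
    nabla (rename σ f) = rename σ (nabla f) := by
  unfold nabla
  rw [← finsum_comp_equiv σ]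
  have h1 : ∀ x : ℕ+, pderiv (σ x) (rename σ f) = rename σ (pderiv x f) :=
    fun x => pderiv_rename σ.injective x f
  rw [finsum_congr h1]
  exact ((rename (R := ℤ) σ).toLinearMap.toAddMonoidHom.map_finsum
    (support_pderiv_finite f)).symm

lemma nabla_X (i : ℕ+) : nabla (X i : MvPolynomial ℕ+ ℤ) = 1 := by
  unfold nabla
  rw [finsum_eq_single _ i (fun j hj => pderiv_X_of_ne (Ne.symm hj))]
  exact pderiv_X_self i

/-- `∇` commutes with every divided difference operator `∂ᵢ`:
if `g = ∂ᵢ f`, encoded denominator-free as `(xᵢ − xᵢ₊₁) g = f − sᵢ f`, then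
`∇ g = ∂ᵢ (∇ f)`, i.e. `(xᵢ − xᵢ₊₁) ∇ g = ∇ f − sᵢ (∇ f)`. -/
theorem nabla_comm_divided_difference (i : ℕ+) (f g : MvPolynomial ℕ+ ℤ)
    (hg : (X i - X (i + 1)) * g = f - rename (Equiv.swap i (i + 1)) f) :
    (X i - X (i + 1)) * nabla g
      = nabla f - rename (Equiv.swap i (i + 1)) (nabla f) := by
  have h := congrArg nabla hg
  rw [nabla_mul, nabla_sub, nabla_sub, nabla_rename, nabla_X, nabla_X, sub_self,
    zero_mul, zero_add] at h
  exact h
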